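/- Let q ≥ 3, C₁ > 0, and define C(q,α,s) = (2C₁/((q-1)(q-2))) Σ_{k≥0} [ (2k+2α+s)^{-(q-2)} + (2k+2-2α+s)^{-(q-2)} - 2(2k+2+s)^{-(q-2)} ] for α ∈ (0,1/2] and s ≥ 0. Then there exists a constant C > 0 depending only on q and C₁ such that for all α ∈ (0,1/2] and all s ∈ [0,α], |C(q,α,s) - C(q,α,0)| ≤ C · s · α^{-(q-1)}. -/

import Mathlib

open Real Set

lemma mvt_rpow {p a b : ℝ} (hp : 0 < p) (ha : 0 < a) (hab : a ≤ b) :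
    |b ^ (-p) - a ^ (-p)| ≤ p * a ^ (-(p+1)) * (b - a) := by
  have key : ∀ x ∈ Set.Icc a b,
      HasDerivWithinAt (fun x : ℝ => x ^ (-p)) (-p * x ^ (-p - 1)) (Set.Icc a b) x := by
    intro x hx
    exact (Real.hasDerivAt_rpow_const (p := -p)
      (Or.inl (ne_of_gt (lt_of_lt_of_le ha hx.1)))).hasDerivWithinAt
  have hbound : ∀ x ∈ Set.Icc a b, ‖-p * x ^ (-p-1)‖ ≤ p * a ^ (-(p+1)) := by
    intro x hx
    have hx0 : 0 < x := lt_of_lt_of_le ha hx.1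
    rw [norm_mul, norm_neg, Real.norm_eq_abs, Real.norm_eq_abs, abs_of_pos hp,
      abs_of_nonneg (Real.rpow_nonneg hx0.le _)]
    have : x ^ (-p-1) ≤ a ^ (-p-1) :=
      Real.rpow_le_rpow_of_nonpos ha hx.1 (by linarith)
    calc p * x ^ (-p-1) ≤ p * a ^ (-p-1) := mul_le_mul_of_nonneg_left this hp.le
    _ = p * a ^ (-(p+1)) := by ring_nf
  have := Convex.norm_image_sub_le_of_norm_hasDerivWithin_le key hbound (convex_Icc a b)
    (Set.left_mem_Icc.2 hab) (Set.right_mem_Icc.2 hab)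
  simpa [Real.norm_eq_abs, abs_of_nonneg (sub_nonneg.2 hab)] using this

lemma base_bound {r α c : ℝ} {k : ℕ} (hr : 0 < r) (hα : 0 < α) (hc : α*((k:ℝ)+1) ≤ c) :
    c ^ (-r) ≤ α^(-r) * ((k:ℝ)+1)^(-r) := by
  have h1 : (0:ℝ) < α*((k:ℝ)+1) := by positivity
  calc c^(-r) ≤ (α*((k:ℝ)+1))^(-r) := Real.rpow_le_rpow_of_nonpos h1 hc (by linarith)
  _ = α^(-r) * ((k:ℝ)+1)^(-r) := Real.mul_rpow hα.le (by positivity)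

theorem stmt10 (q C₁ : ℝ) (hq : 3 ≤ q) (hC₁ : 0 < C₁)
    (Cfun : ℝ → ℝ → ℝ)
    (hCfun : ∀ α s : ℝ, Cfun α s = (2*C₁/((q-1)*(q-2))) *
      ∑' k : ℕ, ((2*(k:ℝ)+2*α+s)^(-(q-2)) + (2*(k:ℝ)+2-2*α+s)^(-(q-2))
        - 2*(2*(k:ℝ)+2+s)^(-(q-2)))) :
    ∃ C > 0, ∀ α ∈ Set.Ioc (0:ℝ) (1/2), ∀ s ∈ Set.Icc (0:ℝ) α,
      |Cfun α s - Cfun α 0| ≤ C * s * α^(-(q-1)) := by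
  have hp : (0:ℝ) < q - 2 := by linarith
  have hr : (0:ℝ) < q - 1 := by linarith
  have hSsum : Summable (fun k : ℕ => ((k:ℝ)+1) ^ (-(q-1))) := by
    have h0 : Summable (fun n : ℕ => (n:ℝ) ^ (-(q-1))) :=
      Real.summable_nat_rpow.mpr (by linarith)
    have := (summable_nat_add_iff 1).mpr h0
    simpa using this
  set S := ∑' k : ℕ, ((k:ℝ)+1) ^ (-(q-1)) with hS_def
  have hS1 : 1 ≤ S := by
    have := Summable.le_tsum hSsum 0 (fun i _ => Real.rpow_nonneg (by positivity) _)
    simpa only [Nat.cast_zero, zero_add, Real.one_rpow] using this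
  have hS0 : 0 < S := by linarith
  have hc0 : 0 < 2*C₁/((q-1)*(q-2)) := by
    apply div_pos (by linarith) (mul_pos hr hp)
  refine ⟨(2*C₁/((q-1)*(q-2))) * (4*(q-2)*S),
    mul_pos hc0 (by positivity), ?_⟩
  intro α hα s hs
  obtain ⟨hα0, hα2⟩ := hα
  obtain ⟨hs0, hsα⟩ := hs
  set f : ℝ → ℕ → ℝ := fun t k =>
    (2*(k:ℝ)+2*α+t)^(-(q-2)) + (2*(k:ℝ)+2-2*α+t)^(-(q-2))
      - 2*(2*(k:ℝ)+2+t)^(-(q-2)) with hf_def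
  -- per-term absolute bound (for summability)
  have hsummand : ∀ t : ℝ, 0 ≤ t → ∀ k : ℕ,
      |f t k| ≤ (3*(q-2)*α^(-(q-1))) * ((k:ℝ)+1)^(-(q-1)) := by
    intro t ht k
    have hk : (0:ℝ) ≤ (k:ℝ) := Nat.cast_nonneg k
    set a1 : ℝ := 2*(k:ℝ)+2*α+t with ha1_def
    set a2 : ℝ := 2*(k:ℝ)+2-2*α+t with ha2_def
    set a3 : ℝ := 2*(k:ℝ)+2+t with ha3_def
    have ha1 : 0 < a1 := by simp only [ha1_def]; linarith
    have ha2 : 0 < a2 := by simp only [ha2_def]; linarith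
    have h13 : a1 ≤ a3 := by simp only [ha1_def, ha3_def]; linarith
    have h23 : a2 ≤ a3 := by simp only [ha2_def, ha3_def]; linarith
    have hm1 := mvt_rpow hp ha1 h13
    have hm2 := mvt_rpow hp ha2 h23
    rw [show (q-2)+1 = q-1 from by ring] at hm1 hm2
    have hA1 : a1^(-(q-1)) ≤ α^(-(q-1)) * ((k:ℝ)+1)^(-(q-1)) :=
      base_bound hr hα0 (by
        have h : α*(k:ℝ) ≤ 2*(k:ℝ) := mul_le_mul_of_nonneg_right (by linarith) hk
        simp only [ha1_def]; linarith)
    have hA2 : a2^(-(q-1)) ≤ α^(-(q-1)) * ((k:ℝ)+1)^(-(q-1)) :=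
      base_bound hr hα0 (by
        have h : α*(k:ℝ) ≤ 2*(k:ℝ) := mul_le_mul_of_nonneg_right (by linarith) hk
        simp only [ha2_def]; linarith)
    have hfe : f t k = (a1^(-(q-2)) - a3^(-(q-2))) + (a2^(-(q-2)) - a3^(-(q-2))) := by
      simp only [hf_def, ha1_def, ha2_def, ha3_def]; ring
    have h31 : a3 - a1 ≤ 2 := by simp only [ha1_def, ha3_def]; linarith
    have h32 : a3 - a2 ≤ 1 := by simp only [ha2_def, ha3_def]; linarith
    calc |f t k| ≤ |a1^(-(q-2)) - a3^(-(q-2))| + |a2^(-(q-2)) - a3^(-(q-2))| := by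
          rw [hfe]; exact abs_add_le _ _
      _ ≤ (q-2) * a1^(-(q-1)) * (a3-a1) + (q-2) * a2^(-(q-1)) * (a3-a2) := by
          rw [abs_sub_comm (a1^(-(q-2))), abs_sub_comm (a2^(-(q-2)))]
          exact add_le_add hm1 hm2
      _ ≤ (q-2) * (α^(-(q-1)) * ((k:ℝ)+1)^(-(q-1))) * 2
            + (q-2) * (α^(-(q-1)) * ((k:ℝ)+1)^(-(q-1))) * 1 := by
          gcongr <;> first
            | exact hp.le
            | positivity
            | assumption
            | linarith
      _ = (3*(q-2)*α^(-(q-1))) * ((k:ℝ)+1)^(-(q-1)) := by ring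
  -- per-term difference bound
  have hdiff : ∀ k : ℕ,
      |f s k - f 0 k| ≤ (4*(q-2)*s*α^(-(q-1))) * ((k:ℝ)+1)^(-(q-1)) := by
    intro k
    have hk : (0:ℝ) ≤ (k:ℝ) := Nat.cast_nonneg k
    set b1 : ℝ := 2*(k:ℝ)+2*α with hb1_def
    set b2 : ℝ := 2*(k:ℝ)+2-2*α with hb2_def
    set b3 : ℝ := 2*(k:ℝ)+2 with hb3_def
    have hb1 : 0 < b1 := by simp only [hb1_def]; linarith
    have hb2 : 0 < b2 := by simp only [hb2_def]; linarith
    have hb3 : 0 < b3 := by simp only [hb3_def]; linarith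
    have hm1 := mvt_rpow hp hb1 (by linarith : b1 ≤ b1 + s)
    have hm2 := mvt_rpow hp hb2 (by linarith : b2 ≤ b2 + s)
    have hm3 := mvt_rpow hp hb3 (by linarith : b3 ≤ b3 + s)
    rw [show (q-2)+1 = q-1 from by ring] at hm1 hm2 hm3
    simp only [add_sub_cancel_left] at hm1 hm2 hm3
    have hB1 : b1^(-(q-1)) ≤ α^(-(q-1)) * ((k:ℝ)+1)^(-(q-1)) :=
      base_bound hr hα0 (by
        have h : α*(k:ℝ) ≤ 2*(k:ℝ) := mul_le_mul_of_nonneg_right (by linarith) hk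
        simp only [hb1_def]; linarith)
    have hB2 : b2^(-(q-1)) ≤ α^(-(q-1)) * ((k:ℝ)+1)^(-(q-1)) :=
      base_bound hr hα0 (by
        have h : α*(k:ℝ) ≤ 2*(k:ℝ) := mul_le_mul_of_nonneg_right (by linarith) hk
        simp only [hb2_def]; linarith)
    have hB3 : b3^(-(q-1)) ≤ α^(-(q-1)) * ((k:ℝ)+1)^(-(q-1)) :=
      base_bound hr hα0 (by
        have h : α*(k:ℝ) ≤ 2*(k:ℝ) := mul_le_mul_of_nonneg_right (by linarith) hk
        simp only [hb3_def]; linarith)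
    have hfe : f s k - f 0 k =
        ((b1+s)^(-(q-2)) - b1^(-(q-2))) + ((b2+s)^(-(q-2)) - b2^(-(q-2)))
          - 2*((b3+s)^(-(q-2)) - b3^(-(q-2))) := by
      simp only [hf_def, hb1_def, hb2_def, hb3_def, add_zero]; ring
    calc |f s k - f 0 k|
        ≤ |(b1+s)^(-(q-2)) - b1^(-(q-2))| + |(b2+s)^(-(q-2)) - b2^(-(q-2))|
            + 2*|(b3+s)^(-(q-2)) - b3^(-(q-2))| := by
          rw [hfe]
          calc |_| ≤ |((b1+s)^(-(q-2)) - b1^(-(q-2))) + ((b2+s)^(-(q-2)) - b2^(-(q-2)))|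
              + |2*((b3+s)^(-(q-2)) - b3^(-(q-2)))| := abs_sub _ _
            _ ≤ _ := by rw [abs_mul, abs_two]; exact add_le_add (abs_add_le _ _) le_rfl
      _ ≤ (q-2) * b1^(-(q-1)) * s + (q-2) * b2^(-(q-1)) * s
            + 2*((q-2) * b3^(-(q-1)) * s) := by
          gcongr
      _ ≤ (q-2) * (α^(-(q-1)) * ((k:ℝ)+1)^(-(q-1))) * s
            + (q-2) * (α^(-(q-1)) * ((k:ℝ)+1)^(-(q-1))) * s
            + 2*((q-2) * (α^(-(q-1)) * ((k:ℝ)+1)^(-(q-1))) * s) := by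
          gcongr
      _ = (4*(q-2)*s*α^(-(q-1))) * ((k:ℝ)+1)^(-(q-1)) := by ring
  have hsum_s : Summable (f s) :=
    Summable.of_norm_bounded (hSsum.mul_left _)
      (fun k => by simpa [Real.norm_eq_abs] using hsummand s hs0 k)
  have hsum_0 : Summable (f 0) :=
    Summable.of_norm_bounded (hSsum.mul_left _)
      (fun k => by simpa [Real.norm_eq_abs] using hsummand 0 le_rfl k)
  have habs : Summable (fun k => |f s k - f 0 k|) := (hsum_s.sub hsum_0).abs
  have key : |(∑' k, f s k) - (∑' k, f 0 k)| ≤ (4*(q-2)*s*α^(-(q-1))) * S := by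
    rw [← Summable.tsum_sub hsum_s hsum_0]
    calc |∑' k, (f s k - f 0 k)| ≤ ∑' k, |f s k - f 0 k| := by
          simpa [Real.norm_eq_abs] using norm_tsum_le_tsum_norm
            (by simpa [Real.norm_eq_abs] using habs : Summable (fun k => ‖f s k - f 0 k‖))
      _ ≤ ∑' k : ℕ, (4*(q-2)*s*α^(-(q-1))) * ((k:ℝ)+1)^(-(q-1)) :=
          Summable.tsum_le_tsum hdiff habs (hSsum.mul_left _)
      _ = (4*(q-2)*s*α^(-(q-1))) * S := tsum_mul_left
  have hCs : Cfun α s = (2*C₁/((q-1)*(q-2))) * ∑' k, f s k := hCfun α s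
  have hC0 : Cfun α 0 = (2*C₁/((q-1)*(q-2))) * ∑' k, f 0 k := hCfun α 0
  rw [hCs, hC0, ← mul_sub, abs_mul, abs_of_pos hc0]
  calc (2*C₁/((q-1)*(q-2))) * |(∑' k, f s k) - (∑' k, f 0 k)|
      ≤ (2*C₁/((q-1)*(q-2))) * ((4*(q-2)*s*α^(-(q-1))) * S) := by
        exact mul_le_mul_of_nonneg_left key hc0.le
    _ = (2*C₁/((q-1)*(q-2))) * (4*(q-2)*S) * s * α^(-(q-1)) := by ring
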